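/- Suppose the FJ model x(k+1) = ΛW x(k) + (I_n − Λ)u is convergent, with limit x'(u) = lim_{k→∞} x(k) for each u ∈ ℝ^n. For α ∈ (0,1), the 'stubborn approximation' x_α(k+1) = αΛW x_α(k) + (I_n − αΛ)u, x_α(0) = u, is stable and converges to x'_α(u) = (I − αΛW)^{-1}(I − αΛ)u. Then, for every u ∈ ℝ^n, x'_α(u) → x'(u) as α → 1⁻. -/

import Mathlib

open Filter

section FJAux

variable {n : ℕ}

private lemma fjBexpand (A : Matrix (Fin n) (Fin n) ℝ) (α : ℝ) (x : Fin n → ℝ) :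
    (1 - α • A).mulVec x = x - α • A.mulVec x := by
  rw [Matrix.sub_mulVec, Matrix.one_mulVec, Matrix.smul_mulVec]

private lemma fjBinj (A : Matrix (Fin n) (Fin n) ℝ) (hA : ∀ x, ‖A.mulVec x‖ ≤ ‖x‖)
    {α : ℝ} (h0 : 0 < α) (h1 : α < 1) :
    Function.Injective ((1 - α • A).mulVec) := by
  intro x y hxy
  rw [fjBexpand, fjBexpand] at hxy
  have hd : x - y = α • A.mulVec (x - y) := by
    rw [Matrix.mulVec_sub, smul_sub]
    linear_combination (norm := abel) hxy
  by_contra hne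
  have h2 : ‖x - y‖ ≤ α * ‖x - y‖ := by
    calc ‖x - y‖ = ‖α • A.mulVec (x - y)‖ := by rw [← hd]
      _ = |α| * ‖A.mulVec (x - y)‖ := by rw [norm_smul, Real.norm_eq_abs]
      _ ≤ α * ‖x - y‖ := by
          rw [abs_of_pos h0]
          exact mul_le_mul_of_nonneg_left (hA _) h0.le
  have h3 : 0 < ‖x - y‖ := by rw [norm_pos_iff]; exact sub_ne_zero_of_ne hne
  nlinarith

private lemma fjBisUnit (A : Matrix (Fin n) (Fin n) ℝ) (hA : ∀ x, ‖A.mulVec x‖ ≤ ‖x‖)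
    {α : ℝ} (h0 : 0 < α) (h1 : α < 1) : IsUnit (1 - α • A) :=
  Matrix.mulVec_injective_iff_isUnit.mp (fjBinj A hA h0 h1)

private lemma fjBsolve (A : Matrix (Fin n) (Fin n) ℝ) (hA : ∀ x, ‖A.mulVec x‖ ≤ ‖x‖)
    {α : ℝ} (h0 : 0 < α) (h1 : α < 1) (c : Fin n → ℝ) :
    (1 - α • A).mulVec ((1 - α • A)⁻¹.mulVec c) = c := by
  rw [Matrix.mulVec_mulVec, Matrix.mul_nonsing_inv _
    ((Matrix.isUnit_iff_isUnit_det _).mp (fjBisUnit A hA h0 h1)), Matrix.one_mulVec]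

private lemma fjBbound (A : Matrix (Fin n) (Fin n) ℝ) (hA : ∀ x, ‖A.mulVec x‖ ≤ ‖x‖)
    {α : ℝ} (h0 : 0 < α) (h1 : α < 1) (c : Fin n → ℝ) :
    (1 - α) * ‖(1 - α • A)⁻¹.mulVec c‖ ≤ ‖c‖ := by
  set z := (1 - α • A)⁻¹.mulVec c with hz
  have h := fjBsolve A hA h0 h1 c
  rw [fjBexpand] at h
  rw [← hz] at h
  have hzc : z = c + α • A.mulVec z := sub_eq_iff_eq_add.mp h
  have h2 : ‖z‖ ≤ ‖c‖ + α * ‖z‖ := by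
    calc ‖z‖ = ‖c + α • A.mulVec z‖ := by rw [← hzc]
      _ ≤ ‖c‖ + ‖α • A.mulVec z‖ := norm_add_le _ _
      _ ≤ ‖c‖ + α * ‖z‖ := by
          rw [norm_smul, Real.norm_eq_abs, abs_of_pos h0]
          exact add_le_add (le_refl _) (mul_le_mul_of_nonneg_left (hA _) h0.le)
  nlinarith [norm_nonneg z, norm_nonneg c]

private lemma fjBrec (A : Matrix (Fin n) (Fin n) ℝ) (hA : ∀ x, ‖A.mulVec x‖ ≤ ‖x‖)
    {α : ℝ} (h0 : 0 < α) (h1 : α < 1) (w : Fin n → ℝ) :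
    (1 - α • A)⁻¹.mulVec w = w + α • (1 - α • A)⁻¹.mulVec (A.mulVec w) := by
  apply fjBinj A hA h0 h1
  rw [fjBsolve A hA h0 h1, Matrix.mulVec_add, Matrix.mulVec_smul, fjBsolve A hA h0 h1,
    fjBexpand]
  abel

private lemma fjBsum (A : Matrix (Fin n) (Fin n) ℝ) (hA : ∀ x, ‖A.mulVec x‖ ≤ ‖x‖)
    {α : ℝ} (h0 : 0 < α) (h1 : α < 1) (v : Fin n → ℝ) (N : ℕ) :
    (1 - α • A)⁻¹.mulVec v =
      (∑ j ∈ Finset.range N, α ^ j • (A ^ j).mulVec v)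
        + α ^ N • (1 - α • A)⁻¹.mulVec ((A ^ N).mulVec v) := by
  induction N with
  | zero => simp
  | succ N ih =>
    have hAA : A.mulVec ((A ^ N).mulVec v) = (A ^ (N + 1)).mulVec v := by
      rw [Matrix.mulVec_mulVec, ← pow_succ']
    rw [ih, Finset.sum_range_succ, fjBrec A hA h0 h1, hAA, smul_add, smul_smul, ← pow_succ]
    abel

private lemma fjIterConv (A : Matrix (Fin n) (Fin n) ℝ) (hA : ∀ x, ‖A.mulVec x‖ ≤ ‖x‖)
    {α : ℝ} (h0 : 0 < α) (h1 : α < 1) (u b p : Fin n → ℝ)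
    (hp : (α • A).mulVec p + b = p) :
    Tendsto (fun k => (fun x => (α • A).mulVec x + b)^[k] u) atTop (nhds p) := by
  set g : (Fin n → ℝ) → (Fin n → ℝ) := fun x => (α • A).mulVec x + b with hg
  have hstep : ∀ x, g x - p = α • A.mulVec (x - p) := by
    intro x
    calc g x - p = ((α • A).mulVec x + b) - ((α • A).mulVec p + b) := by rw [hp]
      _ = α • A.mulVec (x - p) := by
          rw [Matrix.smul_mulVec, Matrix.smul_mulVec, Matrix.mulVec_sub, smul_sub]
          abel
  have hbd : ∀ k, ‖g^[k] u - p‖ ≤ α ^ k * ‖u - p‖ := by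
    intro k
    induction k with
    | zero => simp
    | succ k ih =>
      rw [Function.iterate_succ_apply', hstep]
      calc ‖α • A.mulVec (g^[k] u - p)‖ = |α| * ‖A.mulVec (g^[k] u - p)‖ := by
            rw [norm_smul, Real.norm_eq_abs]
        _ ≤ α * ‖g^[k] u - p‖ := by
            rw [abs_of_pos h0]; exact mul_le_mul_of_nonneg_left (hA _) h0.le
        _ ≤ α * (α ^ k * ‖u - p‖) := mul_le_mul_of_nonneg_left ih h0.le
        _ = α ^ (k + 1) * ‖u - p‖ := by ring
  have hlim : Tendsto (fun k => α ^ k * ‖u - p‖) atTop (nhds 0) := by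
    simpa using (tendsto_pow_atTop_nhds_zero_of_lt_one h0.le h1).mul_const ‖u - p‖
  have h0' : Tendsto (fun k => g^[k] u - p) atTop (nhds 0) :=
    squeeze_zero_norm hbd hlim
  simpa using tendsto_sub_nhds_zero_iff.mp h0'

private lemma fjNormBound (W : Matrix (Fin n) (Fin n) ℝ) (lam : Fin n → ℝ)
    (hW0 : ∀ i j, 0 ≤ W i j) (hW1 : ∀ i, ∑ j, W i j = 1)
    (hlam : ∀ i, 0 ≤ lam i ∧ lam i ≤ 1) (x : Fin n → ℝ) :
    ‖(Matrix.diagonal lam * W).mulVec x‖ ≤ ‖x‖ := by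
  rw [pi_norm_le_iff_of_nonneg (norm_nonneg x)]
  intro i
  have h1 : (Matrix.diagonal lam * W).mulVec x i = ∑ j, lam i * W i j * x j := by
    simp [Matrix.mulVec, dotProduct, Matrix.diagonal_mul, mul_assoc]
  rw [h1, Real.norm_eq_abs]
  calc |∑ j, lam i * W i j * x j| ≤ ∑ j, |lam i * W i j * x j| := Finset.abs_sum_le_sum_abs _ _
    _ ≤ ∑ j, lam i * W i j * ‖x‖ := by
        apply Finset.sum_le_sum
        intro j _
        rw [abs_mul, abs_of_nonneg (mul_nonneg (hlam i).1 (hW0 i j))]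
        exact mul_le_mul_of_nonneg_left (norm_le_pi_norm x j) (mul_nonneg (hlam i).1 (hW0 i j))
    _ = lam i * ‖x‖ := by rw [← Finset.sum_mul, ← Finset.mul_sum, hW1 i, mul_one]
    _ ≤ 1 * ‖x‖ := mul_le_mul_of_nonneg_right (hlam i).2 (norm_nonneg x)
    _ = ‖x‖ := one_mul _

end FJAux

/-- suppose the FJ model x(k+1) = ΛW x(k) + (I-Λ)u is convergent with limit
x'(u) for each u. For α ∈ (0,1) the stubborn approximation
x_α(k+1) = αΛW x_α(k) + (I-αΛ)u is stable and converges to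
x'_α(u) = (I - αΛW)⁻¹(I - αΛ)u; moreover x'_α(u) → x'(u) as α → 1⁻, for every u. -/
theorem fj_stubborn_approximation {n : ℕ}
    (W : Matrix (Fin n) (Fin n) ℝ) (lam : Fin n → ℝ)
    (hW0 : ∀ i j, 0 ≤ W i j) (hW1 : ∀ i, ∑ j, W i j = 1)
    (hlam : ∀ i, 0 ≤ lam i ∧ lam i ≤ 1)
    (xlim : (Fin n → ℝ) → (Fin n → ℝ))
    (hconv : ∀ u : Fin n → ℝ,
      Tendsto (fun k => (fun x => (Matrix.diagonal lam * W).mulVec x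
          + (1 - Matrix.diagonal lam).mulVec u)^[k] u) atTop (nhds (xlim u))) :
    (∀ α : ℝ, α ∈ Set.Ioo (0 : ℝ) 1 →
      IsUnit (1 - α • (Matrix.diagonal lam * W)) ∧
      ∀ u : Fin n → ℝ,
        Tendsto (fun k => (fun x => (α • (Matrix.diagonal lam * W)).mulVec x
            + (1 - α • Matrix.diagonal lam).mulVec u)^[k] u) atTop
          (nhds ((1 - α • (Matrix.diagonal lam * W))⁻¹.mulVec
            ((1 - α • Matrix.diagonal lam).mulVec u)))) ∧
    (∀ u : Fin n → ℝ,
      Tendsto (fun α : ℝ => (1 - α • (Matrix.diagonal lam * W))⁻¹.mulVec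
          ((1 - α • Matrix.diagonal lam).mulVec u))
        (nhdsWithin 1 (Set.Ioo (0 : ℝ) 1)) (nhds (xlim u))) := by
  set A := Matrix.diagonal lam * W with hAdef
  have hA : ∀ x, ‖A.mulVec x‖ ≤ ‖x‖ := fjNormBound W lam hW0 hW1 hlam
  constructor
  · intro α hα
    refine ⟨fjBisUnit A hA hα.1 hα.2, fun u => ?_⟩
    set b := (1 - α • Matrix.diagonal lam).mulVec u with hb
    set p := (1 - α • A)⁻¹.mulVec b with hp
    have hfp : (α • A).mulVec p + b = p := by
      have h := fjBsolve A hA hα.1 hα.2 b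
      rw [fjBexpand] at h
      rw [Matrix.smul_mulVec, ← hp] at *
      rw [← h]
      abel
    exact fjIterConv A hA hα.1 hα.2 u b p hfp
  · intro u
    set c := (1 - Matrix.diagonal lam).mulVec u with hc
    set L := xlim u with hL
    set f : (Fin n → ℝ) → Fin n → ℝ := fun x => A.mulVec x + c with hf
    have hconvu : Tendsto (fun k => f^[k] u) atTop (nhds L) := hconv u
    have hcontf : Continuous f := by
      have h1 : Continuous fun x : Fin n → ℝ => A.mulVec x := by
        have := A.mulVecLin.continuous_of_finiteDimensional
        exact this
      exact h1.add continuous_const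
    have hfix : f L = L := by
      have h1 : Tendsto (fun k => f^[k + 1] u) atTop (nhds L) :=
        hconvu.comp (tendsto_add_atTop_nat 1)
      have h2 : Tendsto (fun k => f (f^[k] u)) atTop (nhds (f L)) :=
        (hcontf.tendsto L).comp hconvu
      exact tendsto_nhds_unique h2
        (by simpa [Function.iterate_succ_apply'] using h1)
    have hAk : ∀ k, f^[k] u - L = (A ^ k).mulVec (u - L) := by
      intro k
      induction k with
      | zero => simp
      | succ k ih =>
        rw [Function.iterate_succ_apply']
        calc f (f^[k] u) - L = f (f^[k] u) - f L := by rw [hfix]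
          _ = A.mulVec (f^[k] u - L) := by
              simp only [hf, Matrix.mulVec_sub]; abel
          _ = A.mulVec ((A ^ k).mulVec (u - L)) := by rw [ih]
          _ = (A ^ (k + 1)).mulVec (u - L) := by rw [Matrix.mulVec_mulVec, ← pow_succ']
    have hw : Tendsto (fun k => (A ^ k).mulVec (u - L)) atTop (nhds 0) := by
      have h0 : Tendsto (fun k => f^[k] u - L) atTop (nhds 0) := by
        simpa using hconvu.sub_const L
      rw [show (fun k => (A ^ k).mulVec (u - L)) = fun k => f^[k] u - L from
        funext fun k => (hAk k).symm]
      exact h0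
    rw [Metric.tendsto_nhdsWithin_nhds]
    intro ε hε
    obtain ⟨N, hN⟩ := Metric.tendsto_atTop.mp hw (ε / 2) (by positivity)
    have hwN : ‖(A ^ N).mulVec (u - L)‖ < ε / 2 := by
      simpa [dist_eq_norm] using hN N le_rfl
    set M := ∑ j ∈ Finset.range N, ‖(A ^ j).mulVec (u - L)‖ with hM
    have hM0 : 0 ≤ M := Finset.sum_nonneg fun _ _ => norm_nonneg _
    refine ⟨min 1 (ε / (2 * (M + 1))), by positivity, ?_⟩
    intro α hα hd
    have h0 := hα.1
    have h1 := hα.2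
    have h1α : (0 : ℝ) < 1 - α := by linarith
    have hdist : 1 - α < min 1 (ε / (2 * (M + 1))) := by
      rw [Real.dist_eq, abs_of_neg (by linarith : α - 1 < 0)] at hd
      linarith
    have hIC : (1 - α • A)⁻¹.mulVec ((1 - α • Matrix.diagonal lam).mulVec u) - L
        = (1 - α) • (1 - α • A)⁻¹.mulVec (u - L) := by
      apply fjBinj A hA h0 h1
      have hΛu : (Matrix.diagonal lam).mulVec u = u - c := by
        rw [hc, Matrix.sub_mulVec, Matrix.one_mulVec]; abel
      have hAL : A.mulVec L = L - c := eq_sub_of_add_eq hfix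
      rw [Matrix.mulVec_sub, fjBsolve A hA h0 h1, Matrix.mulVec_smul, fjBsolve A hA h0 h1,
        fjBexpand, fjBexpand, hΛu, hAL]
      module
    rw [dist_eq_norm, hIC, norm_smul, Real.norm_eq_abs, abs_of_pos h1α]
    have hsum := fjBsum A hA h0 h1 (u - L) N
    have hT0 : 0 ≤ ‖(1 - α • A)⁻¹.mulVec ((A ^ N).mulVec (u - L))‖ := norm_nonneg _
    have hznorm : ‖(1 - α • A)⁻¹.mulVec (u - L)‖
        ≤ M + ‖(1 - α • A)⁻¹.mulVec ((A ^ N).mulVec (u - L))‖ := by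
      rw [hsum]
      refine (norm_add_le _ _).trans (add_le_add ?_ ?_)
      · refine (norm_sum_le _ _).trans ?_
        apply Finset.sum_le_sum
        intro j _
        rw [norm_smul, Real.norm_eq_abs, abs_of_pos (pow_pos h0 j)]
        exact mul_le_of_le_one_left (norm_nonneg _) (pow_le_one₀ h0.le h1.le)
      · rw [norm_smul, Real.norm_eq_abs, abs_of_pos (pow_pos h0 N)]
        exact mul_le_of_le_one_left (norm_nonneg _) (pow_le_one₀ h0.le h1.le)
    have hzb := fjBbound A hA h0 h1 ((A ^ N).mulVec (u - L))
    have hδ : 1 - α < ε / (2 * (M + 1)) := lt_of_lt_of_le hdist (min_le_right _ _)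
    have heq : ε / (2 * (M + 1)) * (M + 1) = ε / 2 := by
      field_simp
    nlinarith [norm_nonneg ((1 - α • A)⁻¹.mulVec (u - L)), hznorm, hzb, hwN, hδ, hM0, h1α]
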